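/- arXiv:2006.09144 — 2 statements merged into one kernel-verified Lean document; each statement's English description precedes it below -/
import Mathlib

section
/- (Block Gershgorin) Let B be an n×n real matrix partitioned into blocks B[i][j]. For each eigenvalue λ of B there exists at least one index i ∈ [N] such that either B[i][i] - λI is singular, or (‖(B[i][i] - λI)⁻¹‖_2)⁻¹ ≤ Σ_{j≠i} ‖B[i][j]‖_2. -/
open Matrix BigOperators Finset

noncomputable def specNorm {𝕜 : Type*} [RCLike 𝕜] {m n : Type*} [Fintype m] [Fintype n]
    [DecidableEq m] [DecidableEq n] (A : Matrix m n 𝕜) : ℝ :=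
  ‖LinearMap.toContinuousLinearMap (Matrix.toEuclideanLin A)‖

noncomputable def minEig {n : Type*} [Fintype n] [DecidableEq n] (A : Matrix n n ℝ) : ℝ :=
  sInf {μ : ℝ | (A - μ • 1).det = 0}

noncomputable def maxEig {n : Type*} [Fintype n] [DecidableEq n] (A : Matrix n n ℝ) : ℝ :=
  sSup {μ : ℝ | (A - μ • 1).det = 0}

def blk {N : ℕ} {d : Fin N → ℕ}
    (B : Matrix ((i : Fin N) × Fin (d i)) ((i : Fin N) × Fin (d i)) ℝ) (i j : Fin N) :
    Matrix (Fin (d i)) (Fin (d j)) ℝ := fun a b => B ⟨i, a⟩ ⟨j, b⟩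

noncomputable def eNorm {k : ℕ} (v : Fin k → ℝ) : ℝ := Real.sqrt (∑ a, v a ^ 2)

noncomputable def blockVecNorm {N : ℕ} {d : Fin N → ℕ}
    (x : ((i : Fin N) × Fin (d i)) → ℝ) : ℝ :=
  ⨆ i, eNorm (fun a => x ⟨i, a⟩)

noncomputable def blockOpNorm {N : ℕ} {d : Fin N → ℕ}
    (B : Matrix ((i : Fin N) × Fin (d i)) ((i : Fin N) × Fin (d i)) ℝ) : ℝ :=
  sInf {c | 0 ≤ c ∧ ∀ x, blockVecNorm (B.mulVec x) ≤ c * blockVecNorm x}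

/-! ### Auxiliary lemmas -/

noncomputable def cnorm {k : ℕ} (v : Fin k → ℂ) : ℝ := Real.sqrt (∑ a, ‖v a‖ ^ 2)

lemma cnorm_nonneg {k : ℕ} (v : Fin k → ℂ) : 0 ≤ cnorm v := Real.sqrt_nonneg _

lemma cnorm_eq {k : ℕ} (v : Fin k → ℂ) :
    cnorm v = ‖(WithLp.equiv 2 (Fin k → ℂ)).symm v‖ := by
  rw [EuclideanSpace.norm_eq]; rfl

lemma cnorm_sq {k : ℕ} (v : Fin k → ℂ) : cnorm v ^ 2 = ∑ a, ‖v a‖ ^ 2 :=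
  Real.sq_sqrt (Finset.sum_nonneg fun a _ => sq_nonneg _)

lemma specNorm_nonneg {𝕜 : Type*} [RCLike 𝕜] {m n : Type*} [Fintype m] [Fintype n]
    [DecidableEq m] [DecidableEq n] (A : Matrix m n 𝕜) : 0 ≤ specNorm A := norm_nonneg _

lemma cnorm_mulVec_le {k l : ℕ} (A : Matrix (Fin k) (Fin l) ℂ) (x : Fin l → ℂ) :
    cnorm (A.mulVec x) ≤ specNorm A * cnorm x := by
  rw [cnorm_eq, cnorm_eq, WithLp.equiv_symm_apply, ← Matrix.toEuclideanLin_apply_piLp_toLp]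
  exact (LinearMap.toContinuousLinearMap (Matrix.toEuclideanLin A)).le_opNorm _

noncomputable def eNorm' {k : ℕ} (v : Fin k → ℝ) : ℝ := Real.sqrt (∑ a, v a ^ 2)

lemma eNorm'_sq {k : ℕ} (v : Fin k → ℝ) : eNorm' v ^ 2 = ∑ a, v a ^ 2 :=
  Real.sq_sqrt (Finset.sum_nonneg fun a _ => sq_nonneg _)

lemma eNorm'_nonneg {k : ℕ} (v : Fin k → ℝ) : 0 ≤ eNorm' v := Real.sqrt_nonneg _

lemma eNorm'_eq {k : ℕ} (v : Fin k → ℝ) :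
    eNorm' v = ‖(WithLp.equiv 2 (Fin k → ℝ)).symm v‖ := by
  rw [EuclideanSpace.norm_eq]
  unfold eNorm'
  congr 1
  refine Finset.sum_congr rfl fun a _ => ?_
  rw [Real.norm_eq_abs, sq_abs]
  rfl

lemma eNorm'_mulVec_le {k l : ℕ} (A : Matrix (Fin k) (Fin l) ℝ) (x : Fin l → ℝ) :
    eNorm' (A.mulVec x) ≤ specNorm A * eNorm' x := by
  rw [eNorm'_eq, eNorm'_eq, WithLp.equiv_symm_apply, ← Matrix.toEuclideanLin_apply_piLp_toLp]
  exact (LinearMap.toContinuousLinearMap (Matrix.toEuclideanLin A)).le_opNorm _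

lemma cnorm_map_mulVec_le {k l : ℕ} (A : Matrix (Fin k) (Fin l) ℝ) (x : Fin l → ℂ) :
    cnorm ((A.map Complex.ofReal).mulVec x) ≤ specNorm A * cnorm x := by
  set a : Fin l → ℝ := fun j => (x j).re with ha
  set b : Fin l → ℝ := fun j => (x j).im with hb
  have hre : ∀ i, ((A.map Complex.ofReal).mulVec x i).re = A.mulVec a i := by
    intro i
    simp [Matrix.mulVec, dotProduct, Complex.re_sum, Complex.mul_re, ha]
  have him : ∀ i, ((A.map Complex.ofReal).mulVec x i).im = A.mulVec b i := by
    intro i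
    simp [Matrix.mulVec, dotProduct, Complex.im_sum, Complex.mul_im, hb]
  have hsq : ∀ (z : ℂ), ‖z‖ ^ 2 = z.re ^ 2 + z.im ^ 2 := by
    intro z
    rw [Complex.sq_norm, Complex.normSq_apply]
    ring
  have key : cnorm ((A.map Complex.ofReal).mulVec x) ^ 2 ≤ (specNorm A * cnorm x) ^ 2 := by
    have h1 : cnorm ((A.map Complex.ofReal).mulVec x) ^ 2
        = eNorm' (A.mulVec a) ^ 2 + eNorm' (A.mulVec b) ^ 2 := by
      rw [cnorm_sq, eNorm'_sq, eNorm'_sq, ← Finset.sum_add_distrib]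
      refine Finset.sum_congr rfl fun i _ => ?_
      rw [hsq, hre, him]
    have h2 : cnorm x ^ 2 = eNorm' a ^ 2 + eNorm' b ^ 2 := by
      rw [cnorm_sq, eNorm'_sq, eNorm'_sq, ← Finset.sum_add_distrib]
      refine Finset.sum_congr rfl fun i _ => ?_
      rw [hsq]
    have h3 : eNorm' (A.mulVec a) ^ 2 ≤ (specNorm A * eNorm' a) ^ 2 :=
      pow_le_pow_left₀ (eNorm'_nonneg _) (eNorm'_mulVec_le A a) 2
    have h4 : eNorm' (A.mulVec b) ^ 2 ≤ (specNorm A * eNorm' b) ^ 2 :=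
      pow_le_pow_left₀ (eNorm'_nonneg _) (eNorm'_mulVec_le A b) 2
    calc cnorm ((A.map Complex.ofReal).mulVec x) ^ 2
        = eNorm' (A.mulVec a) ^ 2 + eNorm' (A.mulVec b) ^ 2 := h1
      _ ≤ (specNorm A * eNorm' a) ^ 2 + (specNorm A * eNorm' b) ^ 2 := add_le_add h3 h4
      _ = specNorm A ^ 2 * (eNorm' a ^ 2 + eNorm' b ^ 2) := by ring
      _ = specNorm A ^ 2 * cnorm x ^ 2 := by rw [h2]
      _ = (specNorm A * cnorm x) ^ 2 := by ring
  exact le_of_pow_le_pow_left₀ two_ne_zero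
    (mul_nonneg (specNorm_nonneg A) (cnorm_nonneg x)) key

lemma cnorm_neg {k : ℕ} (v : Fin k → ℂ) : cnorm (-v) = cnorm v := by
  unfold cnorm; simp

lemma cnorm_sum_le {k : ℕ} {ι : Type*} (s : Finset ι) (f : ι → Fin k → ℂ) :
    cnorm (∑ j ∈ s, f j) ≤ ∑ j ∈ s, cnorm (f j) := by
  simp_rw [cnorm_eq]
  have h : (WithLp.equiv 2 (Fin k → ℂ)).symm (∑ j ∈ s, f j)
      = ∑ j ∈ s, (WithLp.equiv 2 (Fin k → ℂ)).symm (f j) := by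
    exact map_sum (WithLp.linearEquiv 2 ℂ (Fin k → ℂ)).symm f s
  rw [h]
  exact norm_sum_le s _

lemma cnorm_pos {k : ℕ} (v : Fin k → ℂ) (a : Fin k) (h : v a ≠ 0) : 0 < cnorm v := by
  apply Real.sqrt_pos.mpr
  refine Finset.sum_pos' (fun i _ => sq_nonneg _) ⟨a, Finset.mem_univ a, ?_⟩
  exact pow_pos (norm_pos_iff.mpr h) 2

lemma block_eq {N : ℕ} {d : Fin N → ℕ}
    (B : Matrix ((i : Fin N) × Fin (d i)) ((i : Fin N) × Fin (d i)) ℝ)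
    (lam : ℂ) (v : ((i : Fin N) × Fin (d i)) → ℂ)
    (hv : (B.map Complex.ofReal - lam • 1).mulVec v = 0) (i : Fin N) :
    ((blk B i i).map Complex.ofReal - lam • 1).mulVec (fun a => v ⟨i, a⟩)
      = - ∑ j ∈ Finset.univ.erase i,
          ((blk B i j).map Complex.ofReal).mulVec (fun a => v ⟨j, a⟩) := by
  funext a
  have h0 := congrFun hv ⟨i, a⟩
  simp only [Matrix.mulVec, dotProduct, Pi.zero_apply] at h0
  rw [← Finset.univ_sigma_univ, Finset.sum_sigma] at h0
  rw [← Finset.add_sum_erase _ _ (Finset.mem_univ i)] at h0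
  have e1 : (((blk B i i).map Complex.ofReal - lam • 1).mulVec fun a => v ⟨i, a⟩) a
      = ∑ b, (B.map Complex.ofReal - lam • 1) ⟨i, a⟩ ⟨i, b⟩ * v ⟨i, b⟩ := by
    simp only [Matrix.mulVec, dotProduct, Matrix.sub_apply, Matrix.map_apply,
      Matrix.smul_apply, Matrix.one_apply, blk, smul_eq_mul]
    refine Finset.sum_congr rfl fun b _ => ?_
    congr 2
    simp [Sigma.mk.inj_iff]
  have e2 : ∀ j ∈ Finset.univ.erase i,
      (∑ b, (B.map Complex.ofReal - lam • 1) ⟨i, a⟩ ⟨j, b⟩ * v ⟨j, b⟩)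
      = (((blk B i j).map Complex.ofReal).mulVec fun a => v ⟨j, a⟩) a := by
    intro j hj
    have hij : ¬ (i = j) := fun h => (Finset.ne_of_mem_erase hj) h.symm
    simp only [Matrix.mulVec, dotProduct, Matrix.sub_apply, Matrix.map_apply,
      Matrix.smul_apply, Matrix.one_apply, blk, smul_eq_mul]
    refine Finset.sum_congr rfl fun b _ => ?_
    rw [if_neg (by simp [Sigma.mk.inj_iff, hij])]
    ring
  rw [Pi.neg_apply, Finset.sum_apply, e1]
  rw [Finset.sum_congr rfl e2] at h0
  exact eq_neg_of_add_eq_zero_left h0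

/-- block Gershgorin circle theorem -/
theorem block_gershgorin {N : ℕ} {d : Fin N → ℕ}
    (B : Matrix ((i : Fin N) × Fin (d i)) ((i : Fin N) × Fin (d i)) ℝ)
    (lam : ℂ) (hlam : (B.map (Complex.ofReal) - lam • 1).det = 0) :
    ∃ i, (¬ IsUnit ((blk B i i).map Complex.ofReal - lam • 1)) ∨
      (specNorm (((blk B i i).map Complex.ofReal - lam • 1)⁻¹))⁻¹
        ≤ ∑ j ∈ Finset.univ.erase i, specNorm (blk B i j) := by
  obtain ⟨v, hv0, hv⟩ := Matrix.exists_mulVec_eq_zero_iff.mpr hlam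
  obtain ⟨p, hp⟩ : ∃ p, v p ≠ 0 := by
    by_contra h; push_neg at h; exact hv0 (funext h)
  have hposI : 0 < cnorm (fun a => v ⟨p.1, a⟩) :=
    cnorm_pos _ p.2 (by simpa using hp)
  obtain ⟨imax, -, hmax⟩ := Finset.exists_max_image Finset.univ
    (fun i => cnorm (fun a => v ⟨i, a⟩)) ⟨p.1, Finset.mem_univ _⟩
  have hMpos : 0 < cnorm (fun a => v ⟨imax, a⟩) :=
    lt_of_lt_of_le hposI (hmax p.1 (Finset.mem_univ _))
  refine ⟨imax, ?_⟩
  by_cases hU : IsUnit ((blk B imax imax).map Complex.ofReal - lam • 1)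
  · right
    set A := (blk B imax imax).map Complex.ofReal - lam • 1 with hA
    have hinv : A⁻¹ * A = 1 :=
      Matrix.nonsing_inv_mul A ((Matrix.isUnit_iff_isUnit_det A).mp hU)
    have hwi : (fun a => v ⟨imax, a⟩) = A⁻¹.mulVec (A.mulVec (fun a => v ⟨imax, a⟩)) := by
      rw [Matrix.mulVec_mulVec, hinv, Matrix.one_mulVec]
    set S := ∑ j ∈ Finset.univ.erase imax, specNorm (blk B imax j) with hS
    have hblock := block_eq B lam v hv imax
    have hc1 : cnorm (A.mulVec (fun a => v ⟨imax, a⟩)) ≤ S * cnorm (fun a => v ⟨imax, a⟩) := by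
      calc cnorm (A.mulVec (fun a => v ⟨imax, a⟩))
          = cnorm (∑ j ∈ Finset.univ.erase imax,
              ((blk B imax j).map Complex.ofReal).mulVec (fun a => v ⟨j, a⟩)) := by
            rw [hblock, cnorm_neg]
        _ ≤ ∑ j ∈ Finset.univ.erase imax,
              cnorm (((blk B imax j).map Complex.ofReal).mulVec (fun a => v ⟨j, a⟩)) :=
            cnorm_sum_le _ _
        _ ≤ ∑ j ∈ Finset.univ.erase imax,
              specNorm (blk B imax j) * cnorm (fun a => v ⟨j, a⟩) :=
            Finset.sum_le_sum fun j _ => cnorm_map_mulVec_le _ _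
        _ ≤ ∑ j ∈ Finset.univ.erase imax,
              specNorm (blk B imax j) * cnorm (fun a => v ⟨imax, a⟩) :=
            Finset.sum_le_sum fun j _ =>
              mul_le_mul_of_nonneg_left (hmax j (Finset.mem_univ _)) (specNorm_nonneg _)
        _ = S * cnorm (fun a => v ⟨imax, a⟩) := (Finset.sum_mul _ _ _).symm
    have main : cnorm (fun a => v ⟨imax, a⟩)
        ≤ specNorm A⁻¹ * (S * cnorm (fun a => v ⟨imax, a⟩)) := by
      calc cnorm (fun a => v ⟨imax, a⟩)
          = cnorm (A⁻¹.mulVec (A.mulVec (fun a => v ⟨imax, a⟩))) := by rw [← hwi]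
        _ ≤ specNorm A⁻¹ * cnorm (A.mulVec (fun a => v ⟨imax, a⟩)) := cnorm_mulVec_le _ _
        _ ≤ specNorm A⁻¹ * (S * cnorm (fun a => v ⟨imax, a⟩)) :=
            mul_le_mul_of_nonneg_left hc1 (specNorm_nonneg _)
    have h1S : 1 ≤ specNorm A⁻¹ * S := by
      have h2 : 1 * cnorm (fun a => v ⟨imax, a⟩)
          ≤ (specNorm A⁻¹ * S) * cnorm (fun a => v ⟨imax, a⟩) := by
        rw [one_mul, mul_assoc]; exact main
      exact le_of_mul_le_mul_right h2 hMpos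
    have hcpos : 0 < specNorm A⁻¹ := by
      rcases lt_or_eq_of_le (specNorm_nonneg A⁻¹) with h | h
      · exact h
      · rw [← h, zero_mul] at h1S; linarith
    rw [← one_div, div_le_iff₀ hcpos]
    calc (1 : ℝ) ≤ specNorm A⁻¹ * S := h1S
      _ = S * specNorm A⁻¹ := mul_comm _ _
  · exact Or.inl hU
end

section
/- Let Q = Qᵀ ≻ 0 be strictly block diagonally dominant with gaps δ_i(Q) > 0, A = diag(α_1 I_{n_1},...,α_N I_{n_N}) with α_i > 0, and r ∈ ℝ^n. With x̂ = -Q⁻¹r and x̂_A = -(Q+A)⁻¹r, the block-maximum norm error satisfies ‖x̂ - x̂_A‖_{2,p} ≤ max_i ‖r^{[i]}‖_2 / ( β_p(I + A⁻¹Q) · β_p(Q) ), where β_p(I + A⁻¹Q) = min_i (1 + α_i⁻¹ δ_i(Q)) and β_p(Q) = min_i δ_i(Q). -/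
open Matrix BigOperators Finset

lemma eNorm_nonneg {k : ℕ} (v : Fin k → ℝ) : 0 ≤ eNorm v := Real.sqrt_nonneg _

lemma eNorm_eq_norm {k : ℕ} (v : Fin k → ℝ) :
    eNorm v = ‖(WithLp.equiv 2 (Fin k → ℝ)).symm v‖ := by
  rw [EuclideanSpace.norm_eq]
  simp [eNorm, Real.norm_eq_abs, sq_abs]

lemma eNorm_neg {k : ℕ} (v : Fin k → ℝ) : eNorm (-v) = eNorm v := by
  simp [eNorm, neg_sq]

lemma eNorm_sq {k : ℕ} (v : Fin k → ℝ) : eNorm v ^ 2 = ∑ a, v a ^ 2 :=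
  Real.sq_sqrt (Finset.sum_nonneg fun a _ => sq_nonneg _)

lemma eNorm_sum_le {k : ℕ} {ι : Type*} (s : Finset ι) (f : ι → (Fin k → ℝ)) :
    eNorm (∑ j ∈ s, f j) ≤ ∑ j ∈ s, eNorm (f j) := by
  simp only [eNorm_eq_norm]
  rw [show (WithLp.equiv 2 (Fin k → ℝ)).symm (∑ j ∈ s, f j)
      = ∑ j ∈ s, (WithLp.equiv 2 (Fin k → ℝ)).symm (f j) from map_sum (WithLp.linearEquiv 2 ℝ _).symm _ _]
  exact norm_sum_le _ _

lemma dotProduct_le_eNorm {k : ℕ} (v w : Fin k → ℝ) : v ⬝ᵥ w ≤ eNorm v * eNorm w := by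
  have h := real_inner_le_norm ((WithLp.equiv 2 (Fin k → ℝ)).symm v)
    ((WithLp.equiv 2 (Fin k → ℝ)).symm w)
  rw [← eNorm_eq_norm, ← eNorm_eq_norm] at h
  refine le_trans (le_of_eq ?_) h
  rw [PiLp.inner_apply]
  simp [dotProduct, mul_comm]

lemma specNorm_nonneg_s13 {k l : ℕ} (A : Matrix (Fin k) (Fin l) ℝ) : 0 ≤ specNorm A :=
  norm_nonneg _

lemma eNorm_mulVec_le {k l : ℕ} (A : Matrix (Fin k) (Fin l) ℝ) (v : Fin l → ℝ) :
    eNorm (A.mulVec v) ≤ specNorm A * eNorm v := by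
  have h := (LinearMap.toContinuousLinearMap (Matrix.toEuclideanLin A)).le_opNorm
    ((WithLp.equiv 2 (Fin l → ℝ)).symm v)
  rw [eNorm_eq_norm, eNorm_eq_norm]
  refine le_trans (le_of_eq ?_) h
  congr 1

lemma specNorm_smul {k l : ℕ} (c : ℝ) (hc : 0 ≤ c) (A : Matrix (Fin k) (Fin l) ℝ) :
    specNorm (c • A) = c * specNorm A := by
  unfold specNorm
  rw [_root_.map_smul, _root_.map_smul,
    norm_smul c (LinearMap.toContinuousLinearMap (Matrix.toEuclideanLin A)),
    Real.norm_eq_abs, abs_of_nonneg hc]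

lemma eNorm_add_le {k : ℕ} (u w : Fin k → ℝ) : eNorm (u + w) ≤ eNorm u + eNorm w := by
  simp only [eNorm_eq_norm]
  exact norm_add_le ((WithLp.equiv 2 (Fin k → ℝ)).symm u) ((WithLp.equiv 2 (Fin k → ℝ)).symm w)

lemma minEig_quad {k : ℕ} (B : Matrix (Fin k) (Fin k) ℝ) (hB : B.IsHermitian)
    (v : Fin k → ℝ) : minEig B * (∑ a, v a ^ 2) ≤ v ⬝ᵥ B.mulVec v := by
  rcases Nat.eq_zero_or_pos k with hk | hk
  · subst hk
    simp [dotProduct]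
  haveI : Nonempty (Fin k) := Fin.pos_iff_nonempty.mp hk
  set U : Matrix (Fin k) (Fin k) ℝ := (hB.eigenvectorUnitary : Matrix (Fin k) (Fin k) ℝ) with hUdef
  have hU1 : U * star U = 1 := (Matrix.mem_unitaryGroup_iff).mp hB.eigenvectorUnitary.2
  have hU2 : star U * U = 1 := (Matrix.mem_unitaryGroup_iff').mp hB.eigenvectorUnitary.2
  have hspec0 : B = U * Matrix.diagonal (RCLike.ofReal ∘ hB.eigenvalues) * star U :=
    hB.spectral_theorem
  have hspec' : B = U * Matrix.diagonal hB.eigenvalues * star U := by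
    simpa only [RCLike.ofReal_real_eq_id, Function.id_comp] using hspec0
  -- determinant characterization
  have hdet : ∀ μ : ℝ, (B - μ • 1).det = ∏ i, (hB.eigenvalues i - μ) := by
    intro μ
    have key : B - μ • 1 = U * Matrix.diagonal (fun i => hB.eigenvalues i - μ) * star U := by
      have hd2 : Matrix.diagonal (fun i => hB.eigenvalues i - μ)
          = Matrix.diagonal hB.eigenvalues - μ • 1 := by
        ext i j
        by_cases h : i = j <;>
          simp [Matrix.diagonal_apply, Matrix.one_apply, h, Matrix.sub_apply]
      rw [hd2, Matrix.mul_sub, Matrix.sub_mul, Matrix.mul_smul, Matrix.mul_one,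
        Matrix.smul_mul, hU1, ← hspec']
    rw [key, Matrix.det_mul, Matrix.det_mul, mul_comm, ← mul_assoc, ← Matrix.det_mul, hU2,
      Matrix.det_one, one_mul, Matrix.det_diagonal]
  have hmin : ∀ i, minEig B ≤ hB.eigenvalues i := by
    intro i
    have hset : {μ : ℝ | (B - μ • 1).det = 0} = Set.range hB.eigenvalues := by
      ext μ
      simp only [Set.mem_setOf_eq, hdet, Finset.prod_eq_zero_iff, Set.mem_range, sub_eq_zero]
      constructor
      · rintro ⟨i, _, hi⟩; exact ⟨i, hi⟩
      · rintro ⟨i, hi⟩; exact ⟨i, Finset.mem_univ i, hi⟩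
    rw [minEig, hset]
    exact csInf_le (Set.finite_range _).bddBelow ⟨i, rfl⟩
  -- quadratic form identity
  set u : Fin k → ℝ := Uᵀ *ᵥ v with hu
  have hstar : star U = Uᵀ := by
    rw [Matrix.star_eq_conjTranspose]
    ext i j
    simp [Matrix.conjTranspose_apply]
  have h1 : v ⬝ᵥ B.mulVec v = ∑ i, hB.eigenvalues i * u i ^ 2 := by
    conv_lhs => rw [hspec', hstar]
    rw [← Matrix.mulVec_mulVec, ← Matrix.mulVec_mulVec, Matrix.dotProduct_mulVec,
      ← Matrix.mulVec_transpose, ← hu]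
    simp [dotProduct, Matrix.mulVec_diagonal]
    exact Finset.sum_congr rfl fun i _ => by ring
  have h2 : ∑ a, v a ^ 2 = ∑ i, u i ^ 2 := by
    have e1 : u ⬝ᵥ u = v ⬝ᵥ v := by
      calc u ⬝ᵥ u = ((Uᵀ *ᵥ v) ᵥ* Uᵀ) ⬝ᵥ v := by rw [hu, Matrix.dotProduct_mulVec]
        _ = ((U * Uᵀ) *ᵥ v) ⬝ᵥ v := by rw [Matrix.vecMul_transpose, Matrix.mulVec_mulVec]
        _ = v ⬝ᵥ v := by rw [← hstar, hU1, Matrix.one_mulVec]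
    have e2 : u ⬝ᵥ u = ∑ i, u i ^ 2 := by simp [dotProduct, sq]
    have e3 : v ⬝ᵥ v = ∑ a, v a ^ 2 := by simp [dotProduct, sq]
    rw [← e2, e1, e3]
  rw [h1, h2, Finset.mul_sum]
  exact Finset.sum_le_sum fun i _ =>
    mul_le_mul_of_nonneg_right (hmin i) (sq_nonneg _)

lemma quad_lower {k : ℕ} (B : Matrix (Fin k) (Fin k) ℝ) (m : ℝ) (hm : 0 ≤ m)
    (h : ∀ v : Fin k → ℝ, m * ∑ a, v a ^ 2 ≤ v ⬝ᵥ B.mulVec v) (v : Fin k → ℝ) :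
    m * eNorm v ≤ eNorm (B.mulVec v) := by
  rcases eq_or_lt_of_le (eNorm_nonneg v) with h0 | h0
  · rw [← h0, mul_zero]
    exact eNorm_nonneg _
  have key : m * eNorm v * eNorm v ≤ eNorm (B.mulVec v) * eNorm v := by
    calc m * eNorm v * eNorm v = m * (eNorm v ^ 2) := by ring
      _ = m * ∑ a, v a ^ 2 := by rw [eNorm_sq]
      _ ≤ v ⬝ᵥ B.mulVec v := h v
      _ ≤ eNorm v * eNorm (B.mulVec v) := dotProduct_le_eNorm _ _
      _ = eNorm (B.mulVec v) * eNorm v := mul_comm _ _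
  exact le_of_mul_le_mul_right key h0

lemma blockVecNorm_nonneg {N : ℕ} [NeZero N] {d : Fin N → ℕ}
    (x : ((i : Fin N) × Fin (d i)) → ℝ) : 0 ≤ blockVecNorm x := by
  have : eNorm (fun a => x ⟨0, a⟩) ≤ blockVecNorm x :=
    le_ciSup (f := fun i => eNorm (fun a => x ⟨i, a⟩))
      (Set.Finite.bddAbove (Set.finite_range _)) 0
  exact le_trans (eNorm_nonneg _) this

lemma block_row_decomp {N : ℕ} {d : Fin N → ℕ}
    (B : Matrix ((i : Fin N) × Fin (d i)) ((i : Fin N) × Fin (d i)) ℝ)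
    (x : ((i : Fin N) × Fin (d i)) → ℝ) (i : Fin N) :
    (fun a => B.mulVec x ⟨i, a⟩)
      = ∑ j, (blk B i j).mulVec (fun b => x ⟨j, b⟩) := by
  funext a
  rw [Finset.sum_apply]
  simp only [Matrix.mulVec, dotProduct, blk]
  rw [← Finset.univ_sigma_univ, Finset.sum_sigma]

lemma block_lower {N : ℕ} (hN : 0 < N) {d : Fin N → ℕ}
    (B : Matrix ((i : Fin N) × Fin (d i)) ((i : Fin N) × Fin (d i)) ℝ)
    (c : Fin N → ℝ) (β : ℝ) (hβ : 0 ≤ β)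
    (hc : ∀ i (v : Fin (d i) → ℝ), c i * eNorm v ≤ eNorm ((blk B i i).mulVec v))
    (hdom : ∀ i, β ≤ c i - ∑ j ∈ Finset.univ.erase i, specNorm (blk B i j))
    (x : ((i : Fin N) × Fin (d i)) → ℝ) :
    β * blockVecNorm x ≤ blockVecNorm (B.mulVec x) := by
  haveI : NeZero N := ⟨hN.ne'⟩
  set f : Fin N → ℝ := fun i => eNorm (fun a => x ⟨i, a⟩) with hf
  obtain ⟨i, hi⟩ := Finite.exists_max f
  have hbvn : blockVecNorm x ≤ f i := ciSup_le hi
  have hfi : 0 ≤ f i := eNorm_nonneg _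
  -- the i-th block of B.mulVec x
  have hrow := block_row_decomp B x i
  have hsplit : (∑ j, (blk B i j).mulVec (fun b => x ⟨j, b⟩))
      = (blk B i i).mulVec (fun b => x ⟨i, b⟩)
        + ∑ j ∈ Finset.univ.erase i, (blk B i j).mulVec (fun b => x ⟨j, b⟩) := by
    rw [← Finset.add_sum_erase _ _ (Finset.mem_univ i)]
  have hoff : eNorm (∑ j ∈ Finset.univ.erase i, (blk B i j).mulVec (fun b => x ⟨j, b⟩))
      ≤ (∑ j ∈ Finset.univ.erase i, specNorm (blk B i j)) * f i := by
    refine le_trans (eNorm_sum_le _ _) ?_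
    rw [Finset.sum_mul]
    refine Finset.sum_le_sum fun j _ => ?_
    refine le_trans (eNorm_mulVec_le _ _) ?_
    exact mul_le_mul_of_nonneg_left (hi j) (specNorm_nonneg_s13 _)
  have hmain : β * f i ≤ eNorm (fun a => B.mulVec x ⟨i, a⟩) := by
    rw [hrow, hsplit]
    have htri : eNorm ((blk B i i).mulVec (fun b => x ⟨i, b⟩))
        - eNorm (∑ j ∈ Finset.univ.erase i, (blk B i j).mulVec (fun b => x ⟨j, b⟩))
        ≤ eNorm ((blk B i i).mulVec (fun b => x ⟨i, b⟩)
          + ∑ j ∈ Finset.univ.erase i, (blk B i j).mulVec (fun b => x ⟨j, b⟩)) := by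
      set u := (blk B i i).mulVec (fun b => x ⟨i, b⟩)
      set w := ∑ j ∈ Finset.univ.erase i, (blk B i j).mulVec (fun b => x ⟨j, b⟩)
      have h1 : eNorm u ≤ eNorm (u + w) + eNorm w := by
        have he : u = (u + w) + (-w) := by ring
        calc eNorm u = eNorm ((u + w) + (-w)) := by rw [← he]
          _ ≤ eNorm (u + w) + eNorm (-w) := eNorm_add_le _ _
          _ = eNorm (u + w) + eNorm w := by rw [eNorm_neg]
      linarith
    refine le_trans ?_ htri
    have h1 : c i * f i ≤ eNorm ((blk B i i).mulVec fun b => x ⟨i, b⟩) := hc i _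
    have h2 := hdom i
    have := mul_le_mul_of_nonneg_right h2 hfi
    nlinarith [hoff]
  refine le_trans (mul_le_mul_of_nonneg_left hbvn hβ) ?_
  exact le_trans hmain (le_ciSup (f := fun i => eNorm (fun a => B.mulVec x ⟨i, a⟩))
    (Set.Finite.bddAbove (Set.finite_range _)) i)


theorem absolute_error_bound {N : ℕ} (hN : 0 < N) {d : Fin N → ℕ}
    (Q : Matrix ((i : Fin N) × Fin (d i)) ((i : Fin N) × Fin (d i)) ℝ)
    (hQ : Q.PosDef)
    (δ : Fin N → ℝ)
    (hδ : ∀ i, δ i = minEig (blk Q i i) - ∑ j ∈ Finset.univ.erase i, specNorm (blk Q i j))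
    (hδpos : ∀ i, 0 < δ i)
    (α : Fin N → ℝ) (hα : ∀ i, 0 < α i)
    (A : Matrix ((i : Fin N) × Fin (d i)) ((i : Fin N) × Fin (d i)) ℝ)
    (hA : A = Matrix.diagonal (fun a => α a.1))
    (r : ((i : Fin N) × Fin (d i)) → ℝ) :
    blockVecNorm (-(Q⁻¹.mulVec r) - -((Q + A)⁻¹.mulVec r))
      ≤ (⨆ i, eNorm (fun a => r ⟨i, a⟩))
        / ((⨅ i, (1 + (α i)⁻¹ * δ i)) * (⨅ i, δ i)) := by
  haveI : NeZero N := ⟨hN.ne'⟩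
  -- hermitian diagonal blocks
  have hQH : ∀ i, (blk Q i i).IsHermitian := by
    intro i
    have h := hQ.1
    ext a b
    have := congrFun (congrFun h ⟨i, a⟩) ⟨i, b⟩
    simpa [Matrix.conjTranspose_apply, blk] using this
  -- δ rewrite: minEig = δ + off sum
  have hδ' : ∀ i, minEig (blk Q i i)
      = δ i + ∑ j ∈ Finset.univ.erase i, specNorm (blk Q i j) := by
    intro i; have := hδ i; linarith
  have hoffnn : ∀ i, 0 ≤ ∑ j ∈ Finset.univ.erase i, specNorm (blk Q i j) :=
    fun i => Finset.sum_nonneg fun j _ => specNorm_nonneg_s13 _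
  have hminpos : ∀ i, 0 < minEig (blk Q i i) := by
    intro i; rw [hδ' i]
    have := hδpos i; have := hoffnn i; linarith
  -- the two β constants
  set βQ : ℝ := ⨅ i, δ i with hβQdef
  set βM : ℝ := ⨅ i, (1 + (α i)⁻¹ * δ i) with hβMdef
  have hβQle : ∀ i, βQ ≤ δ i := fun i =>
    ciInf_le (Set.Finite.bddBelow (Set.finite_range _)) i
  have hβMle : ∀ i, βM ≤ 1 + (α i)⁻¹ * δ i := fun i =>
    ciInf_le (Set.Finite.bddBelow (Set.finite_range _)) i
  have hβQpos : 0 < βQ := by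
    obtain ⟨i0, hi0⟩ := Finite.exists_min δ
    have : βQ = δ i0 := le_antisymm (hβQle i0) (le_ciInf hi0)
    rw [this]; exact hδpos i0
  have hβMpos : 0 < βM := by
    obtain ⟨i0, hi0⟩ := Finite.exists_min (fun i => 1 + (α i)⁻¹ * δ i)
    have : βM = 1 + (α i0)⁻¹ * δ i0 := le_antisymm (hβMle i0) (le_ciInf hi0)
    rw [this]
    have := mul_pos (inv_pos.mpr (hα i0)) (hδpos i0)
    linarith
  -- invertibility facts
  have hQdet : IsUnit Q.det := hQ.det_pos.ne'.isUnit
  have hApos : A.PosDef := by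
    rw [hA]; exact Matrix.posDef_diagonal_iff.mpr fun a => hα a.1
  have hQAdet : IsUnit (Q + A).det := (hQ.add hApos).det_pos.ne'.isUnit
  have hAdet : IsUnit A.det := hApos.det_pos.ne'.isUnit
  have hAinv : A⁻¹ = Matrix.diagonal (fun a : (i : Fin N) × Fin (d i) => (α a.1)⁻¹) := by
    apply Matrix.inv_eq_right_inv
    rw [hA, Matrix.diagonal_mul_diagonal]
    have : (fun a : (i : Fin N) × Fin (d i) => α a.1 * (α a.1)⁻¹) = fun _ => 1 :=
      funext fun a => mul_inv_cancel₀ (hα a.1).ne'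
    rw [this, Matrix.diagonal_one]
  set M : Matrix ((i : Fin N) × Fin (d i)) ((i : Fin N) × Fin (d i)) ℝ := 1 + A⁻¹ * Q with hMdef
  -- blocks of M
  have hMblk_diag : ∀ i, blk M i i = 1 + (α i)⁻¹ • blk Q i i := by
    intro i
    ext a b
    simp only [blk, hMdef, Matrix.add_apply, hAinv, Matrix.diagonal_mul, Matrix.smul_apply,
      Matrix.one_apply, smul_eq_mul]
    by_cases h : a = b
    · subst h; simp
    · rw [if_neg h, if_neg (show ¬(⟨i, a⟩ : (i : Fin N) × Fin (d i)) = ⟨i, b⟩ from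
        fun hh => h (eq_of_heq (Sigma.mk.inj_iff.mp hh).2))]
  have hMblk_off : ∀ i j, i ≠ j → blk M i j = (α i)⁻¹ • blk Q i j := by
    intro i j hij
    ext a b
    simp only [blk, hMdef, Matrix.add_apply, hAinv, Matrix.diagonal_mul, Matrix.smul_apply,
      Matrix.one_apply, smul_eq_mul]
    rw [if_neg (show ¬(⟨i, a⟩ : (i : Fin N) × Fin (d i)) = ⟨j, b⟩ from
      fun hh => hij (congrArg Sigma.fst hh))]
    ring
  -- quadratic bounds for diag blocks of M
  have hquadM : ∀ i (v : Fin (d i) → ℝ),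
      (1 + (α i)⁻¹ * minEig (blk Q i i)) * ∑ a, v a ^ 2 ≤ v ⬝ᵥ (blk M i i).mulVec v := by
    intro i v
    rw [hMblk_diag i, Matrix.add_mulVec, Matrix.one_mulVec, dotProduct_add,
      Matrix.smul_mulVec, dotProduct_smul]
    have h1 := minEig_quad (blk Q i i) (hQH i) v
    have h2 : v ⬝ᵥ v = ∑ a, v a ^ 2 := by simp [dotProduct, sq]
    have h3 : (0:ℝ) ≤ (α i)⁻¹ := (inv_pos.mpr (hα i)).le
    have h4 := mul_le_mul_of_nonneg_left h1 h3
    rw [h2]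
    have : (α i)⁻¹ • (v ⬝ᵥ (blk Q i i).mulVec v) = (α i)⁻¹ * (v ⬝ᵥ (blk Q i i).mulVec v) := rfl
    rw [this]
    nlinarith
  -- eNorm lower bounds for diag blocks
  have hcQ : ∀ i (v : Fin (d i) → ℝ),
      minEig (blk Q i i) * eNorm v ≤ eNorm ((blk Q i i).mulVec v) := by
    intro i
    exact quad_lower _ _ (hminpos i).le (minEig_quad _ (hQH i))
  have hcM : ∀ i (v : Fin (d i) → ℝ),
      (1 + (α i)⁻¹ * minEig (blk Q i i)) * eNorm v ≤ eNorm ((blk M i i).mulVec v) := by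
    intro i
    refine quad_lower _ _ ?_ (hquadM i)
    have := mul_nonneg (inv_pos.mpr (hα i)).le (hminpos i).le
    linarith
  -- off-diagonal sums for M
  have hMoff_sum : ∀ i, ∑ j ∈ Finset.univ.erase i, specNorm (blk M i j)
      = (α i)⁻¹ * ∑ j ∈ Finset.univ.erase i, specNorm (blk Q i j) := by
    intro i
    rw [Finset.mul_sum]
    refine Finset.sum_congr rfl fun j hj => ?_
    have hij : i ≠ j := (Finset.ne_of_mem_erase hj).symm
    rw [hMblk_off i j hij, specNorm_smul _ (inv_pos.mpr (hα i)).le]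
  -- dominance hypotheses
  have hdomQ : ∀ i, βQ ≤ minEig (blk Q i i)
      - ∑ j ∈ Finset.univ.erase i, specNorm (blk Q i j) := by
    intro i; rw [← hδ i]; exact hβQle i
  have hdomM : ∀ i, βM ≤ (1 + (α i)⁻¹ * minEig (blk Q i i))
      - ∑ j ∈ Finset.univ.erase i, specNorm (blk M i j) := by
    intro i
    rw [hMoff_sum i, hδ' i]
    have : (1 + (α i)⁻¹ * (δ i + ∑ j ∈ Finset.univ.erase i, specNorm (blk Q i j)))
        - (α i)⁻¹ * ∑ j ∈ Finset.univ.erase i, specNorm (blk Q i j)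
        = 1 + (α i)⁻¹ * δ i := by ring
    rw [this]
    exact hβMle i
  -- matrix identity
  have hid : M * (Q⁻¹ - (Q + A)⁻¹) = Q⁻¹ := by
    have e1 : M * Q⁻¹ = Q⁻¹ + A⁻¹ := by
      rw [hMdef, add_mul, one_mul, mul_assoc, Matrix.mul_nonsing_inv _ hQdet, mul_one]
    have e2 : M * (Q + A)⁻¹ = A⁻¹ := by
      have hM2 : M = A⁻¹ * (A + Q) := by
        rw [hMdef, mul_add, Matrix.nonsing_inv_mul _ hAdet]
      rw [hM2, mul_assoc, add_comm A Q, Matrix.mul_nonsing_inv _ hQAdet, mul_one]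
    rw [mul_sub, e1, e2]
    abel
  -- vectors
  set z : ((i : Fin N) × Fin (d i)) → ℝ := Q⁻¹.mulVec r with hz
  set y : ((i : Fin N) × Fin (d i)) → ℝ := z - (Q + A)⁻¹.mulVec r with hy
  have hMy : M.mulVec y = z := by
    rw [hy, hz, ← Matrix.sub_mulVec, Matrix.mulVec_mulVec, hid]
  have hQz : Q.mulVec z = r := by
    rw [hz, Matrix.mulVec_mulVec, Matrix.mul_nonsing_inv _ hQdet, Matrix.one_mulVec]
  have hLHSvec : -(Q⁻¹.mulVec r) - -((Q + A)⁻¹.mulVec r) = -y := by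
    rw [hy, hz]; abel
  have hLHS : blockVecNorm (-(Q⁻¹.mulVec r) - -((Q + A)⁻¹.mulVec r)) = blockVecNorm y := by
    rw [hLHSvec]
    unfold blockVecNorm
    congr 1
    funext i
    have : (fun a => (-y) ⟨i, a⟩) = -(fun a => y ⟨i, a⟩) := rfl
    rw [this, eNorm_neg]
  -- apply the block lower bounds
  have s1 : βM * blockVecNorm y ≤ blockVecNorm z := by
    have := block_lower hN M (fun i => 1 + (α i)⁻¹ * minEig (blk Q i i)) βM hβMpos.le
      hcM hdomM y
    rwa [hMy] at this
  have s2 : βQ * blockVecNorm z ≤ blockVecNorm r := by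
    have := block_lower hN Q (fun i => minEig (blk Q i i)) βQ hβQpos.le hcQ hdomQ z
    rwa [hQz] at this
  rw [hLHS]
  show blockVecNorm y ≤ blockVecNorm r / (βM * βQ)
  rw [le_div_iff₀ (mul_pos hβMpos hβQpos)]
  calc blockVecNorm y * (βM * βQ) = βQ * (βM * blockVecNorm y) := by ring
    _ ≤ βQ * blockVecNorm z := mul_le_mul_of_nonneg_left s1 hβQpos.le
    _ ≤ blockVecNorm r := s2
end
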